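/- Let h ≥ 2, let s, t be nonnegative integers with gcd(h, s−t) = 1, let Y₀ ⊆ ℕ be infinite with infinite gaps, X₀ = ℕ \ Y₀, and A = {s} ∪ {hx + t : x ∈ X₀}. If b ∈ ℕ \ A satisfies b ≢ s (mod h) and b ≢ t (mod h), then A ∪ {b} is an asymptotic basis of order h for ℕ. -/

import Mathlib

def sumsetN (h : ℕ) (A : Set ℕ) : Set ℕ :=
  {n | ∃ f : Fin h → ℕ, (∀ i, f i ∈ A) ∧ n = ∑ i, f i}

def InfiniteGapsN (Y : Set ℕ) : Prop :=
  ∀ C : ℤ, 0 < C →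
    {p : ℕ × ℕ | p.1 ∈ Y ∧ p.2 ∈ Y ∧ p.1 ≠ p.2 ∧ |(p.1 : ℤ) - p.2| ≤ C}.Finite

lemma sum_univ_get_aux (l : List ℕ) : ∑ i, l.get i = l.sum := by
  induction l with
  | nil => simp
  | cons a l ih => rw [List.sum_cons, ← ih]; simp [Fin.sum_univ_succ]

lemma list_mem_sumsetN {h : ℕ} {S : Set ℕ} {l : List ℕ} (hl : l.length = h)
    (hmem : ∀ a ∈ l, a ∈ S) : l.sum ∈ sumsetN h S := by
  subst hl
  exact ⟨l.get, fun i => hmem _ (l.get_mem i), (sum_univ_get_aux l).symm⟩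

lemma two_sum_aux {Y : Set ℕ} (hg : InfiniteGapsN Y) :
    ∃ N : ℕ, ∀ M ≥ N, ∃ x y : ℕ, x ∉ Y ∧ y ∉ Y ∧ x + y = M := by
  have hfin := hg 4 (by norm_num)
  obtain ⟨D, hD⟩ := (hfin.image Prod.fst).bddAbove
  simp only [upperBounds, Set.mem_image, Set.mem_setOf_eq] at hD
  have key : ∀ u v : ℕ, u ∈ Y → v ∈ Y → u ≠ v → u ≤ v + 4 → v ≤ u + 4 → u ≤ D := by
    intro u v hu hv hne h1 h2
    exact hD ⟨(u, v), ⟨hu, hv, hne, by rw [abs_le]; push_cast; omega⟩, rfl⟩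
  have keyL : ∀ u v : ℕ, u ∈ Y → v ∈ Y → D < u → u ≠ v → u ≤ v + 4 → v ≤ u + 4 → False := by
    intro u v hu hv hDu hne h1 h2
    have := key u v hu hv hne h1 h2
    omega
  refine ⟨2 * D + 10, fun M hM => ?_⟩
  by_contra hcon
  push_neg at hcon
  have bad : ∀ i : ℕ, i < 3 → (D + 1 + i ∈ Y ∨ M - (D + 1 + i) ∈ Y) := by
    intro i hi
    by_contra hq
    push_neg at hq
    exact hcon _ _ hq.1 hq.2 (by omega)
  rcases bad 0 (by omega) with h0 | h0 <;> rcases bad 1 (by omega) with h1 | h1 <;>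
    rcases bad 2 (by omega) with h2 | h2
  · exact keyL _ _ h1 h0 (by omega) (by omega) (by omega) (by omega)
  · exact keyL _ _ h1 h0 (by omega) (by omega) (by omega) (by omega)
  · exact keyL _ _ h2 h0 (by omega) (by omega) (by omega) (by omega)
  · exact keyL _ _ h1 h2 (by omega) (by omega) (by omega) (by omega)
  · exact keyL _ _ h2 h1 (by omega) (by omega) (by omega) (by omega)
  · exact keyL _ _ h0 h2 (by omega) (by omega) (by omega) (by omega)
  · exact keyL _ _ h0 h1 (by omega) (by omega) (by omega) (by omega)
  · exact keyL _ _ h0 h1 (by omega) (by omega) (by omega) (by omega)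

theorem stmt17 (h : ℕ) (hh : 2 ≤ h) (s t : ℕ)
    (hgcd : Int.gcd (h : ℤ) ((s : ℤ) - t) = 1)
    (Y₀ : Set ℕ) (hYinf : Y₀.Infinite) (hYgaps : InfiniteGapsN Y₀)
    (X₀ : Set ℕ) (hX : X₀ = Y₀ᶜ)
    (A : Set ℕ) (hA : A = {s} ∪ {m : ℕ | ∃ x ∈ X₀, m = h * x + t})
    (b : ℕ) (hb : b ∉ A)
    (hbs : ¬ (b : ℤ) ≡ (s : ℤ) [ZMOD (h : ℤ)]) (hbt : ¬ (b : ℤ) ≡ (t : ℤ) [ZMOD (h : ℤ)]) :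
    (sumsetN h (A ∪ {b}))ᶜ.Finite := by
  subst hX hA
  haveI : NeZero h := ⟨by omega⟩
  haveI : Fact (1 < h) := ⟨by omega⟩
  have valcast : ∀ a : ZMod h, ((a.val : ℕ) : ZMod h) = a := fun a => ZMod.natCast_rightInverse a
  -- d := s - t is a unit in ZMod h
  have hcop : IsCoprime (h : ℤ) ((s : ℤ) - t) := Int.isCoprime_iff_gcd_eq_one.mpr hgcd
  obtain ⟨u, v, huv⟩ := hcop
  have hd : IsUnit ((s : ZMod h) - (t : ZMod h)) := by
    refine IsUnit.of_mul_eq_one ((v : ℤ) : ZMod h) ?_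
    have hc := congrArg (fun z : ℤ => (z : ZMod h)) huv
    push_cast at hc
    rw [ZMod.natCast_self] at hc
    linear_combination hc
  have hbs' : (b : ZMod h) ≠ (s : ZMod h) := by
    intro e
    apply hbs
    rw [← ZMod.intCast_eq_intCast_iff]
    push_cast
    exact e
  have hbt' : (b : ZMod h) ≠ (t : ZMod h) := by
    intro e
    apply hbt
    rw [← ZMod.intCast_eq_intCast_iff]
    push_cast
    exact e
  have hst' : (s : ZMod h) ≠ (t : ZMod h) := by
    intro e
    exact hd.ne_zero (by rw [e]; ring)
  have h3 : 3 ≤ h := by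
    by_contra hlt
    have h2 : h = 2 := by omega
    subst h2
    have hall : ∀ x : ZMod 2, x = 0 ∨ x = 1 := by decide
    rcases hall (b : ZMod 2) with e1 | e1 <;> rcases hall (s : ZMod 2) with e2 | e2 <;>
      rcases hall (t : ZMod 2) with e3 | e3 <;> simp_all
  -- residue selection
  have pick : ∀ r : ZMod h, ∃ j ε k' : ℕ, j + ε + (k' + 2) = h ∧ ε ≤ 1 ∧
      (j : ZMod h) * ((s : ZMod h) - t) + (ε : ZMod h) * ((b : ZMod h) - t) = r := by
    intro r
    obtain ⟨w, hdd⟩ : ∃ w : ZMod h, w * ((s : ZMod h) - t) = 1 := ⟨↑hd.unit⁻¹, hd.val_inv_mul⟩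
    by_cases hcase : (r * w).val ≤ h - 2
    · refine ⟨(r * w).val, 0, h - 2 - (r * w).val, by omega, by omega, ?_⟩
      rw [valcast]
      push_cast
      linear_combination r * hdd
    · have hval : (r * w).val = h - 1 := by
        have := ZMod.val_lt (r * w)
        omega
      set j₁ := ((r - ((b : ZMod h) - t)) * w).val with hj₁def
      have e1 : (j₁ : ZMod h) * ((s : ZMod h) - t) = r - ((b : ZMod h) - t) := by
        rw [hj₁def, valcast]
        linear_combination (r - ((b : ZMod h) - t)) * hdd
      have e0 : (((h - 1 : ℕ)) : ZMod h) * ((s : ZMod h) - t) = r := by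
        rw [← hval, valcast]
        linear_combination r * hdd
      have hne1 : j₁ ≠ h - 1 := by
        intro e
        apply hbt'
        rw [e] at e1
        linear_combination e1 - e0
      have hne2 : j₁ ≠ h - 2 := by
        intro e
        apply hbs'
        have hc : ((h - 2 : ℕ) : ZMod h) = ((h - 1 : ℕ) : ZMod h) - 1 := by
          have h21 : (h : ℕ) - 2 + 1 = h - 1 := by omega
          rw [← h21]
          push_cast
          ring
        rw [e, hc] at e1
        linear_combination e1 - e0
      have hlt : j₁ < h := ZMod.val_lt _
      refine ⟨j₁, 1, h - 3 - j₁, by omega, le_refl 1, ?_⟩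
      push_cast
      linear_combination e1
  -- two-sum property
  obtain ⟨N₂, htwo⟩ := two_sum_aux hYgaps
  obtain ⟨x₀, y₀, hx₀, hy₀, hxy₀⟩ := htwo N₂ le_rfl
  set N₀ := h * s + b + h * t + h * (h * x₀ + N₂) with hN₀def
  apply Set.Finite.subset (Set.finite_Iio N₀)
  intro n hn
  simp only [Set.mem_compl_iff] at hn
  by_contra hge
  simp only [Set.mem_Iio, not_lt] at hge
  apply hn
  obtain ⟨j, ε, k', hsum, hε, hres⟩ := pick (n : ZMod h)
  set e := j * s + ε * b + (k' + 2) * t with hedef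
  have hcong : e ≡ n [MOD h] := by
    rw [← ZMod.natCast_eq_natCast_iff]
    have hh0 : ((j : ZMod h) + ε + ((k' : ZMod h) + 2)) = 0 := by
      have hc : ((j + ε + (k' + 2) : ℕ) : ZMod h) = ((h : ℕ) : ZMod h) := by rw [hsum]
      rw [ZMod.natCast_self] at hc
      push_cast at hc
      exact hc
    rw [hedef]
    push_cast
    linear_combination hres + (t : ZMod h) * hh0
  have hebound : e + h * (k' * x₀ + N₂) ≤ N₀ := by
    have h1 : j * s ≤ h * s := Nat.mul_le_mul_right _ (by omega)
    have h2 : ε * b ≤ 1 * b := Nat.mul_le_mul_right _ hε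
    have h3' : (k' + 2) * t ≤ h * t := Nat.mul_le_mul_right _ (by omega)
    have h4 : k' * x₀ + N₂ ≤ h * x₀ + N₂ := by
      have : k' * x₀ ≤ h * x₀ := Nat.mul_le_mul_right _ (by omega)
      omega
    have h5 : h * (k' * x₀ + N₂) ≤ h * (h * x₀ + N₂) := Nat.mul_le_mul_left _ h4
    omega
  have hen : e ≤ n := by omega
  obtain ⟨M, hM⟩ := (Nat.modEq_iff_dvd' hen).mp hcong
  have hnM : n = e + h * M := by omega
  have hMge : k' * x₀ + N₂ ≤ M := by
    have hm : h * (k' * x₀ + N₂) ≤ h * M := by omega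
    exact Nat.le_of_mul_le_mul_left hm (by omega)
  obtain ⟨x, y, hxY, hyY, hxy⟩ := htwo (M - k' * x₀) (by omega)
  set l : List ℕ := List.replicate j s ++ List.replicate ε b ++
      [h * x + t, h * y + t] ++ List.replicate k' (h * x₀ + t) with hldef
  have hlen : l.length = h := by
    simp only [hldef, List.length_append, List.length_replicate, List.length_cons,
      List.length_nil]
    omega
  have hmem : ∀ a ∈ l, a ∈ (({s} ∪ {m : ℕ | ∃ x ∈ Y₀ᶜ, m = h * x + t}) ∪ {b} : Set ℕ) := by
    intro a ha
    simp only [hldef, List.mem_append, List.mem_replicate, List.mem_cons,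
      List.not_mem_nil, or_false, List.mem_singleton] at ha
    rcases ha with ((⟨-, rfl⟩ | ⟨-, rfl⟩) | (rfl | rfl)) | ⟨-, rfl⟩
    · exact Or.inl (Or.inl rfl)
    · exact Or.inr rfl
    · exact Or.inl (Or.inr ⟨x, hxY, rfl⟩)
    · exact Or.inl (Or.inr ⟨y, hyY, rfl⟩)
    · exact Or.inl (Or.inr ⟨x₀, hx₀, rfl⟩)
  have hlsum : l.sum = n := by
    have hMeq : M = k' * x₀ + x + y := by omega
    simp only [hldef, List.sum_append, List.sum_replicate, smul_eq_mul, List.sum_cons,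
      List.sum_nil]
    rw [hnM, hedef, hMeq]
    ring
  exact hlsum ▸ list_mem_sumsetN hlen hmem
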